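/- Let γ ≥ 1, μ > 0, v₊ > 1, ε > 0 with v₋^ε := 1 + ε^{1/γ} < v₊, and define p_ε, s_ε, Φ_ε as in the soft-congestion setting. If w₁, w₂ : ℝ → ℝ are two differentiable functions with values in the open interval (v₋^ε, v₊) both satisfying w'(x) = (w(x)/(μ s_ε)) Φ_ε(w(x)) for all x ∈ ℝ, then there exists c ∈ ℝ such that w₂(x) = w₁(x + c) for all x ∈ ℝ; i.e., the monotone heteroclinic profile of the soft-congestion traveling-wave ODE is unique up to a shift. -/

import Mathlib

open Set

/-- The soft-congestion traveling-wave vector field. -/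
noncomputable def Fsc (μ se : ℝ) (Φ : ℝ → ℝ) : ℝ → ℝ := fun v => v / (μ * se) * Φ v

/-- Uniqueness up to a shift of the monotone heteroclinic profile of the soft-congestion
traveling-wave ODE `w' = (w/(μ s_ε)) Φ_ε(w)` with values in `(v₋^ε, v₊)`. -/
theorem stmt7 (γ μ vp ε : ℝ) (hγ : 1 ≤ γ) (hμ : 0 < μ) (hvp : 1 < vp) (hε : 0 < ε)
    (pe : ℝ → ℝ) (hpe : ∀ v : ℝ, pe v = ε * (v - 1) ^ (-γ))
    (vm : ℝ) (hvm : vm = 1 + ε ^ (1 / γ)) (hlt : vm < vp)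
    (se : ℝ) (hse : se = Real.sqrt ((pe vm - pe vp) / (vp - vm)))
    (Φ : ℝ → ℝ) (hΦ : ∀ v : ℝ, Φ v = se ^ 2 * (vp - v) + pe vp - pe v)
    (w₁ w₂ : ℝ → ℝ)
    (hw₁range : ∀ x : ℝ, w₁ x ∈ Ioo vm vp)
    (hw₂range : ∀ x : ℝ, w₂ x ∈ Ioo vm vp)
    (hw₁ode : ∀ x : ℝ, HasDerivAt w₁ (w₁ x / (μ * se) * Φ (w₁ x)) x)
    (hw₂ode : ∀ x : ℝ, HasDerivAt w₂ (w₂ x / (μ * se) * Φ (w₂ x)) x) :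
    ∃ c : ℝ, ∀ x : ℝ, w₂ x = w₁ (x + c) := by
  have hγ0 : (0:ℝ) < γ := lt_of_lt_of_le one_pos hγ
  have hvm1 : (1:ℝ) < vm := by
    rw [hvm]; nlinarith [Real.rpow_pos_of_pos hε (1/γ)]
  have hpe_lt : ∀ a b : ℝ, 1 < a → a < b → pe b < pe a := by
    intro a b ha hab
    rw [hpe, hpe]
    have h1 : (0:ℝ) < a - 1 := by linarith
    have := Real.rpow_lt_rpow_of_neg h1 (by linarith : a - 1 < b - 1) (neg_neg_of_pos hγ0)
    exact mul_lt_mul_of_pos_left this hε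
  have hpevv : pe vp < pe vm := hpe_lt vm vp hvm1 hlt
  have hden : (0:ℝ) < vp - vm := by linarith
  have hfrac : 0 < (pe vm - pe vp)/(vp - vm) := div_pos (by linarith) hden
  have hsepos : 0 < se := by rw [hse]; exact Real.sqrt_pos.mpr hfrac
  have hμse : 0 < μ * se := mul_pos hμ hsepos
  have hse2 : se ^ 2 = (pe vm - pe vp)/(vp - vm) := by
    rw [hse, Real.sq_sqrt hfrac.le]
  have hΦvm : Φ vm = 0 := by
    rw [hΦ, hse2, div_mul_cancel₀ _ hden.ne']; ring
  have hΦvp : Φ vp = 0 := by rw [hΦ]; ring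
  -- derivative of Φ
  have hΦderiv : ∀ v : ℝ, 1 < v →
      HasDerivAt Φ (-se^2 + ε*γ*(v-1)^(-γ-1)) v := by
    intro v hv
    have hne : v - 1 ≠ 0 := sub_ne_zero.mpr (ne_of_gt hv)
    have h1 : HasDerivAt (fun x : ℝ => x - 1) 1 v := (hasDerivAt_id v).sub_const 1
    have h2 : HasDerivAt (fun x : ℝ => x ^ (-γ)) (-γ * (v-1) ^ (-γ-1)) (v-1) :=
      Real.hasDerivAt_rpow_const (Or.inl hne)
    have h3 : HasDerivAt (fun x : ℝ => (x - 1) ^ (-γ)) (-γ * (v-1) ^ (-γ-1) * 1) v :=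
      by have := h2.comp v h1; exact this
    have h4 : HasDerivAt (fun x : ℝ => se^2*(vp - x) + pe vp - ε*(x-1)^(-γ))
        (se^2 * (-1) - ε * (-γ * (v-1)^(-γ-1) * 1)) v := by
      exact ((((hasDerivAt_id v).const_sub vp).const_mul (se^2)).add_const (pe vp)).sub
        (h3.const_mul ε)
    have hfun : Φ = fun v => se^2*(vp - v) + pe vp - ε*(v-1)^(-γ) := by
      funext y; rw [hΦ y, hpe y]
    rw [hfun]
    convert h4 using 1; ring
  have hΦcont : ContinuousOn Φ (Icc vm vp) := fun x hx =>
    (hΦderiv x (lt_of_lt_of_le hvm1 hx.1)).differentiableAt.continuousAt.continuousWithinAt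
  have hanti : StrictAntiOn (deriv Φ) (interior (Icc vm vp)) := by
    rw [interior_Icc]
    intro a ha b hb hab
    have ha1 : (1:ℝ) < a := lt_trans hvm1 ha.1
    have hb1 : (1:ℝ) < b := lt_trans hvm1 hb.1
    rw [(hΦderiv a ha1).deriv, (hΦderiv b hb1).deriv]
    have hr : (b-1)^(-γ-1) < (a-1)^(-γ-1) :=
      Real.rpow_lt_rpow_of_neg (by linarith) (by linarith) (by linarith)
    have h := mul_lt_mul_of_pos_left hr (mul_pos hε hγ0)
    rw [mul_assoc, mul_assoc] at h; linarith
  have hconc : StrictConcaveOn ℝ (Icc vm vp) Φ :=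
    hanti.strictConcaveOn_of_deriv (convex_Icc _ _) hΦcont
  have hΦpos : ∀ v ∈ Ioo vm vp, 0 < Φ v := by
    intro v hv
    have h1 : 0 < vp - v := by linarith [hv.2]
    have h2 : 0 < v - vm := by linarith [hv.1]
    have hapos : 0 < (vp - v)/(vp - vm) := div_pos h1 hden
    have hbpos : 0 < (v - vm)/(vp - vm) := div_pos h2 hden
    have hab : (vp - v)/(vp - vm) + (v - vm)/(vp - vm) = 1 := by field_simp; ring
    have hcomb : ((vp - v)/(vp - vm)) • vm + ((v - vm)/(vp - vm)) • vp = v := by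
      simp only [smul_eq_mul]; field_simp; ring
    have h := hconc.2 (left_mem_Icc.mpr hlt.le) (right_mem_Icc.mpr hlt.le) (ne_of_lt hlt)
      hapos hbpos hab
    rw [hΦvm, hΦvp, hcomb] at h
    simpa using h
  -- the vector field
  have hFval : ∀ v : ℝ, Fsc μ se Φ v = v / (μ * se) * Φ v := fun _ => rfl
  have hFpos : ∀ v ∈ Ioo vm vp, 0 < Fsc μ se Φ v := fun v hv => by
    rw [hFval]
    exact mul_pos (div_pos (lt_trans one_pos (lt_trans hvm1 hv.1)) hμse) (hΦpos v hv)
  have hFderiv : ∀ v : ℝ, 1 < v → HasDerivAt (Fsc μ se Φ)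
      (1/(μ*se)*Φ v + v/(μ*se)*(-se^2 + ε*γ*(v-1)^(-γ-1))) v := by
    intro v hv
    exact ((hasDerivAt_id v).div_const (μ*se)).mul (hΦderiv v hv)
  -- Lipschitz constant on Icc vm vp
  have hGcont : ContinuousOn
      (fun v : ℝ => 1/(μ*se)*Φ v + v/(μ*se)*(-se^2 + ε*γ*(v-1)^(-γ-1))) (Icc vm vp) := by
    intro x hx
    have hx1 : (1:ℝ) < x := lt_of_lt_of_le hvm1 hx.1
    have hne : x - 1 ≠ 0 := sub_ne_zero.mpr (ne_of_gt hx1)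
    have hsubc : ContinuousAt (fun v : ℝ => v - 1) x := (continuous_sub_right (1:ℝ)).continuousAt
    have hrc : ContinuousAt (fun v : ℝ => (v-1)^(-γ-1)) x :=
      hsubc.rpow_const (Or.inl hne)
    have hΦc : ContinuousAt Φ x := (hΦderiv x hx1).differentiableAt.continuousAt
    exact ((continuousAt_const.mul hΦc).add ((continuousAt_id.div_const _).mul
      (continuousAt_const.add (continuousAt_const.mul hrc)))).continuousWithinAt
  obtain ⟨C, hC⟩ := (isCompact_Icc : IsCompact (Icc vm vp)).exists_bound_of_continuousOn hGcont
  have hlip : LipschitzOnWith (max C 0).toNNReal (Fsc μ se Φ) (Icc vm vp) := by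
    apply (convex_Icc vm vp).lipschitzOnWith_of_nnnorm_hasDerivWithin_le
      (fun x hx => (hFderiv x (lt_of_lt_of_le hvm1 hx.1)).hasDerivWithinAt)
    intro x hx
    rw [← NNReal.coe_le_coe, coe_nnnorm, Real.coe_toNNReal _ (le_max_right _ _)]
    exact le_trans (hC x hx) (le_max_left _ _)
  -- w₁ is strictly monotone
  have hmono : StrictMono w₁ := strictMono_of_deriv_pos (fun x => by
    rw [(hw₁ode x).deriv]
    exact hFpos (w₁ x) (hw₁range x))
  have hbdd : BddAbove (range w₁) := ⟨vp, by rintro y ⟨x, rfl⟩; exact (hw₁range x).2.le⟩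
  have hbddb : BddBelow (range w₁) := ⟨vm, by rintro y ⟨x, rfl⟩; exact (hw₁range x).1.le⟩
  have htop : Filter.Tendsto w₁ Filter.atTop (nhds (⨆ x, w₁ x)) :=
    tendsto_atTop_ciSup hmono.monotone hbdd
  have hbot : Filter.Tendsto w₁ Filter.atBot (nhds (⨅ x, w₁ x)) :=
    tendsto_atBot_ciInf hmono.monotone hbddb
  have hle_L : ∀ x, w₁ x ≤ ⨆ x, w₁ x := fun x => le_ciSup hbdd x
  have hl_le : ∀ x, (⨅ x, w₁ x) ≤ w₁ x := fun x => ciInf_le hbddb x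
  have hLle : (⨆ x, w₁ x) ≤ vp := ciSup_le fun x => (hw₁range x).2.le
  have hlge : vm ≤ ⨅ x, w₁ x := le_ciInf fun x => (hw₁range x).1.le
  -- limit at +∞ is vp
  have hLvp : (⨆ x, w₁ x) = vp := by
    by_contra hne
    have hLlt : (⨆ x, w₁ x) < vp := lt_of_le_of_ne hLle hne
    have hsub : Icc (w₁ 0) (⨆ x, w₁ x) ⊆ Ioo vm vp := fun y hy =>
      ⟨lt_of_lt_of_le (hw₁range 0).1 hy.1, lt_of_le_of_lt hy.2 hLlt⟩
    have hFcont : ContinuousOn (Fsc μ se Φ) (Icc (w₁ 0) (⨆ x, w₁ x)) := fun y hy =>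
      (hFderiv y (lt_trans hvm1 (hsub hy).1)).differentiableAt.continuousAt.continuousWithinAt
    obtain ⟨z, hz, hzmin⟩ := isCompact_Icc.exists_isMinOn (nonempty_Icc.mpr (hle_L 0)) hFcont
    have hmpos : 0 < Fsc μ se Φ z := hFpos z (hsub hz)
    set m := Fsc μ se Φ z with hm
    have hgmono : MonotoneOn (fun x => w₁ x - m * x) (Ici (0:ℝ)) := by
      apply monotoneOn_of_deriv_nonneg (convex_Ici 0)
      · exact fun y _ =>
          ((hw₁ode y).sub ((hasDerivAt_id y).const_mul m)).continuousAt.continuousWithinAt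
      · exact fun y _ =>
          ((hw₁ode y).sub ((hasDerivAt_id y).const_mul m)).differentiableAt.differentiableWithinAt
      · intro y hy
        rw [interior_Ici] at hy
        have hder : HasDerivAt (fun x : ℝ => w₁ x - m * x)
            (w₁ y / (μ * se) * Φ (w₁ y) - m * 1) y :=
          (hw₁ode y).sub ((hasDerivAt_id y).const_mul m)
        rw [hder.deriv]
        have hwy : w₁ y ∈ Icc (w₁ 0) (⨆ x, w₁ x) := ⟨hmono.monotone hy.le, hle_L y⟩
        have h1 : m ≤ Fsc μ se Φ (w₁ y) := isMinOn_iff.mp hzmin (w₁ y) hwy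
        rw [hFval] at h1
        linarith
    have hx0 : (0:ℝ) ≤ (vp - w₁ 0)/m := div_nonneg (by linarith [(hw₁range 0).2]) hmpos.le
    have h2 := hgmono (self_mem_Ici) (mem_Ici.mpr hx0) hx0
    simp only [mul_zero, sub_zero] at h2
    rw [mul_div_cancel₀ _ hmpos.ne'] at h2
    have h3 := (hw₁range ((vp - w₁ 0)/m)).2
    linarith
  -- limit at -∞ is vm
  have hlvm : (⨅ x, w₁ x) = vm := by
    by_contra hne
    have hllt : vm < ⨅ x, w₁ x := lt_of_le_of_ne hlge (Ne.symm hne)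
    have hsub : Icc (⨅ x, w₁ x) (w₁ 0) ⊆ Ioo vm vp := fun y hy =>
      ⟨lt_of_lt_of_le hllt hy.1, lt_of_le_of_lt hy.2 (hw₁range 0).2⟩
    have hFcont : ContinuousOn (Fsc μ se Φ) (Icc (⨅ x, w₁ x) (w₁ 0)) := fun y hy =>
      (hFderiv y (lt_trans hvm1 (hsub hy).1)).differentiableAt.continuousAt.continuousWithinAt
    obtain ⟨z, hz, hzmin⟩ := isCompact_Icc.exists_isMinOn (nonempty_Icc.mpr (hl_le 0)) hFcont
    have hmpos : 0 < Fsc μ se Φ z := hFpos z (hsub hz)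
    set m := Fsc μ se Φ z with hm
    have hgmono : MonotoneOn (fun x => w₁ x - m * x) (Iic (0:ℝ)) := by
      apply monotoneOn_of_deriv_nonneg (convex_Iic 0)
      · exact fun y _ =>
          ((hw₁ode y).sub ((hasDerivAt_id y).const_mul m)).continuousAt.continuousWithinAt
      · exact fun y _ =>
          ((hw₁ode y).sub ((hasDerivAt_id y).const_mul m)).differentiableAt.differentiableWithinAt
      · intro y hy
        rw [interior_Iic] at hy
        have hder : HasDerivAt (fun x : ℝ => w₁ x - m * x)
            (w₁ y / (μ * se) * Φ (w₁ y) - m * 1) y :=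
          (hw₁ode y).sub ((hasDerivAt_id y).const_mul m)
        rw [hder.deriv]
        have hwy : w₁ y ∈ Icc (⨅ x, w₁ x) (w₁ 0) := ⟨hl_le y, hmono.monotone hy.le⟩
        have h1 : m ≤ Fsc μ se Φ (w₁ y) := isMinOn_iff.mp hzmin (w₁ y) hwy
        rw [hFval] at h1
        linarith
    have hxneg : (vm - w₁ 0)/m ≤ 0 :=
      div_nonpos_of_nonpos_of_nonneg (by linarith [(hw₁range 0).1]) hmpos.le
    have h2 := hgmono (mem_Iic.mpr hxneg) (self_mem_Iic) hxneg
    simp only [mul_zero, sub_zero] at h2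
    rw [mul_div_cancel₀ _ hmpos.ne'] at h2
    have h3 := (hw₁range ((vm - w₁ 0)/m)).1
    linarith
  -- find the shift
  have hyL : w₂ 0 < ⨆ x, w₁ x := hLvp ▸ (hw₂range 0).2
  have hly : (⨅ x, w₁ x) < w₂ 0 := hlvm ▸ (hw₂range 0).1
  obtain ⟨b, hb⟩ := (htop.eventually (eventually_gt_nhds hyL)).exists
  obtain ⟨a, ha⟩ := (hbot.eventually (eventually_lt_nhds hly)).exists
  have hab : a ≤ b := (hmono.lt_iff_lt.mp (ha.trans hb)).le
  have hcont1 : ContinuousOn w₁ (Icc a b) := fun x _ =>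
    (hw₁ode x).continuousAt.continuousWithinAt
  obtain ⟨c, hcmem, hc⟩ := intermediate_value_Icc hab hcont1 ⟨ha.le, hb.le⟩
  -- uniqueness up to shift
  refine ⟨c, fun x => ?_⟩
  have huode : ∀ t : ℝ, HasDerivAt (fun t => w₁ (t + c))
      (Fsc μ se Φ (w₁ (t + c))) t := fun t => by
    have h := (hw₁ode (t + c)).comp t ((hasDerivAt_id t).add_const c)
    simpa [Fsc, Function.comp_def] using h
  have hu0 : w₂ 0 = w₁ (0 + c) := by rw [zero_add, hc]
  have hmemx : x ∈ Ioo (-(|x|+1)) (|x|+1) :=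
    ⟨by linarith [neg_abs_le x, abs_nonneg x], by linarith [le_abs_self x]⟩
  have hmem0 : (0:ℝ) ∈ Ioo (-(|x|+1)) (|x|+1) :=
    ⟨by linarith [abs_nonneg x], by linarith [abs_nonneg x]⟩
  have huniq := ODE_solution_unique_of_mem_Ioo
    (v := fun _ => Fsc μ se Φ) (s := fun _ => Icc vm vp)
    (K := (max C 0).toNNReal) (fun _ _ => hlip) hmem0
    (fun t _ => ⟨hw₂ode t, Ioo_subset_Icc_self (hw₂range t)⟩)
    (fun t _ => ⟨huode t, Ioo_subset_Icc_self (hw₁range (t + c))⟩)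
    hu0
  exact huniq hmemx
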